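/- Let n ≥ 1 and let p, a_1, a_2, t be nonzero complex numbers with |p| < 1, generic so that all theta denominators appearing in the fundamental invariants are nonzero. Then the functions E_0(a_1, a_2; ·), E_1(a_1, a_2; ·), …, E_n(a_1, a_2; ·) on (ℂ*)^n are linearly independent over ℂ: if λ_0, …, λ_n ∈ ℂ satisfy Σ_{r=0}^n λ_r E_r(a_1, a_2; z) = 0 for all z ∈ (ℂ*)^n, then λ_0 = … = λ_n = 0. -/

import Mathlib

open Finset

/-- The theta function `θ(z;p) = ∏_{i≥0} (1 - p^i z)(1 - p^{i+1}/z)`. -/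
noncomputable def theta (p z : ℂ) : ℂ :=
  ∏' i : ℕ, ((1 - p ^ i * z) * (1 - p ^ (i + 1) * z⁻¹))

/-- The theta shifted factorial `θ(z;p;q)_k = ∏_{j=0}^{k-1} θ(q^j z;p)`. -/
noncomputable def thetaPoch (p q z : ℂ) (k : ℕ) : ℂ :=
  ∏ j ∈ Finset.range k, theta p (q ^ j * z)

/-- `θ(x u^{±1};p) = θ(xu;p) θ(x/u;p)`. -/
noncomputable def thetaPm (p x u : ℂ) : ℂ :=
  theta p (x * u) * theta p (x * u⁻¹)

/-- The fundamental `BC_n` invariant `E_r(a₁,a₂;z)`, as a sum over the subsets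
`S = {i_1 < … < i_r}` of `{0,…,n-1}` (0-based indexing); for `i ∈ S`,
`(S.filter (· < i)).card` is the (0-based) rank of `i` in `S`. -/
noncomputable def Efun (p t a₁ a₂ : ℂ) {n : ℕ} (r : ℕ) (z : Fin n → ℂ) : ℂ :=
  ∑ S ∈ Finset.powersetCard r (Finset.univ : Finset (Fin n)),
    (∏ i ∈ S,
        thetaPm p (a₂ * t ^ ((i : ℕ) - (S.filter (fun j => j < i)).card)) (z i) /
          thetaPm p (a₂ * t ^ ((i : ℕ) - (S.filter (fun j => j < i)).card))
            (a₁ * t ^ (S.filter (fun j => j < i)).card)) *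
    (∏ i ∈ Sᶜ,
        thetaPm p (a₁ * t ^ ((i : ℕ) - (Sᶜ.filter (fun j => j < i)).card)) (z i) /
          thetaPm p (a₁ * t ^ ((i : ℕ) - (Sᶜ.filter (fun j => j < i)).card))
            (a₂ * t ^ (Sᶜ.filter (fun j => j < i)).card))

/-- Genericity: all theta denominators appearing in the fundamental invariants are nonzero. -/
def eDenomsNZ (p t a₁ a₂ : ℂ) (n : ℕ) : Prop :=
  ∀ k l : ℕ, k < n → l < n →
    thetaPm p (a₂ * t ^ k) (a₁ * t ^ l) ≠ 0 ∧ thetaPm p (a₁ * t ^ k) (a₂ * t ^ l) ≠ 0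

/-- The reference point `ζ^{(s)} = (a₁, a₁t, …, a₁ t^{s-1}, a₂, a₂ t, …, a₂ t^{n-s-1})`. -/
noncomputable def zetaPt (a₁ a₂ t : ℂ) (n s : ℕ) : Fin n → ℂ :=
  fun i => if (i : ℕ) < s then a₁ * t ^ (i : ℕ) else a₂ * t ^ ((i : ℕ) - s)

/-- `F_i^+(z)`. -/
noncomputable def Fplus (p t : ℂ) (a : Fin 6 → ℂ) {n : ℕ} (i : Fin n) (z : Fin n → ℂ) : ℂ :=
  ((∏ m : Fin 6, theta p (a m * z i)) / ((z i) ^ 2 * theta p ((z i) ^ 2))) *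
    ∏ j ∈ Finset.univ.erase i, thetaPm p (t * z i) (z j) / thetaPm p (z i) (z j)

/-- `F_i^-(z) = F_i^+(z_1, …, z_i⁻¹, …, z_n)`. -/
noncomputable def Fminus (p t : ℂ) (a : Fin 6 → ℂ) {n : ℕ} (i : Fin n) (z : Fin n → ℂ) : ℂ :=
  Fplus p t a i (Function.update z i (z i)⁻¹)

/-- None of the theta denominators of `F_i^+` vanishes at `z`. -/
def FplusDenomNZ (p : ℂ) {n : ℕ} (i : Fin n) (z : Fin n → ℂ) : Prop :=
  theta p ((z i) ^ 2) ≠ 0 ∧ ∀ j, j ≠ i → thetaPm p (z i) (z j) ≠ 0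

/-- None of the theta denominators of `F_i^-` vanishes at `z`. -/
def FminusDenomNZ (p : ℂ) {n : ℕ} (i : Fin n) (z : Fin n → ℂ) : Prop :=
  FplusDenomNZ p i (Function.update z i (z i)⁻¹)

/-- `h_r(z) = Σ_i (F_i^-(z) + F_i^+(z)) E_{r-1}^{(n-1)}(z_1,…,ẑ_i,…,z_n)`, in `n+1` variables. -/
noncomputable def hFun (p t : ℂ) (a : Fin 6 → ℂ) (n r : ℕ) (z : Fin (n + 1) → ℂ) : ℂ :=
  ∑ i : Fin (n + 1),
    (Fminus p t a i z + Fplus p t a i z) *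
      Efun p t (a 0) (a 1) (r - 1) (fun j : Fin n => z (i.succAbove j))

/-- The base point `ξ = (a₁, a₁ t, …, a₁ t^{n-1})`. -/
noncomputable def xiPt (a₁ t : ℂ) (n : ℕ) : Fin n → ℂ := fun i => a₁ * t ^ (i : ℕ)

/-- The weight `W(ν) = Φ(q^ν ξ)/Φ(ξ)` of the truncated Jackson integral. -/
noncomputable def weight (p q t : ℂ) (a : Fin 6 → ℂ) (n : ℕ) (ν : Fin n → ℕ) : ℂ :=
  (∏ i : Fin n,
      (q ^ 2 * (a 0 * a 1 * a 2 * a 3 * a 4 * a 5 * t ^ (2 * n - 2))⁻¹ *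
            t ^ (2 * (n - 1 - (i : ℕ)))) ^ ν i *
        theta p (q ^ (2 * ν i) * xiPt (a 0) t n i ^ 2) / theta p (xiPt (a 0) t n i ^ 2)) *
  (∏ j : Fin n, ∏ k ∈ Finset.Ioi j,
      theta p (q ^ (ν k - ν j) * (xiPt (a 0) t n k / xiPt (a 0) t n j)) *
          theta p (q ^ (ν j + ν k) * (xiPt (a 0) t n j * xiPt (a 0) t n k)) /
        (theta p (xiPt (a 0) t n k / xiPt (a 0) t n j) *
          theta p (xiPt (a 0) t n j * xiPt (a 0) t n k))) *
  (∏ i : Fin n, ∏ m : Fin 6,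
      thetaPoch p q (a m * xiPt (a 0) t n i) (ν i) /
        thetaPoch p q (q * (a m)⁻¹ * xiPt (a 0) t n i) (ν i)) *
  (∏ j : Fin n, ∏ k ∈ Finset.Ioi j,
      thetaPoch p q (t * (xiPt (a 0) t n k / xiPt (a 0) t n j)) (ν k - ν j) *
          thetaPoch p q (t * (xiPt (a 0) t n j * xiPt (a 0) t n k)) (ν j + ν k) /
        (thetaPoch p q (q * t⁻¹ * (xiPt (a 0) t n k / xiPt (a 0) t n j)) (ν k - ν j) *
          thetaPoch p q (q * t⁻¹ * (xiPt (a 0) t n j * xiPt (a 0) t n k)) (ν j + ν k)))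

/-- The truncated Jackson integral `⟨φ⟩ = Σ_{0 ≤ ν₁ ≤ … ≤ ν_n ≤ N} W(ν) φ(q^ν ξ)`. -/
noncomputable def jackson (p q t : ℂ) (a : Fin 6 → ℂ) (n N : ℕ)
    (φ : (Fin n → ℂ) → ℂ) : ℂ :=
  ∑ ν ∈ Finset.univ.filter
      (fun ν : Fin n → Fin (N + 1) => ∀ i j : Fin n, i ≤ j → ν i ≤ ν j),
    weight p q t a n (fun i => (ν i : ℕ)) *
      φ (fun i => q ^ (ν i : ℕ) * xiPt (a 0) t n i)

/-- Genericity: all theta denominators appearing in the weight `W(ν)`,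
for `0 ≤ ν₁ ≤ … ≤ ν_n ≤ N`, are nonzero. -/
def weightDenomsNZ (p q t : ℂ) (a : Fin 6 → ℂ) (n N : ℕ) : Prop :=
  (∀ i : Fin n, theta p (xiPt (a 0) t n i ^ 2) ≠ 0) ∧
  (∀ j k : Fin n, j < k →
      theta p (xiPt (a 0) t n k / xiPt (a 0) t n j) ≠ 0 ∧
        theta p (xiPt (a 0) t n j * xiPt (a 0) t n k) ≠ 0) ∧
  (∀ (m : Fin 6) (i : Fin n) (k : ℕ), k ≤ N →
      thetaPoch p q (q * (a m)⁻¹ * xiPt (a 0) t n i) k ≠ 0) ∧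
  (∀ j k : Fin n, j < k → ∀ l : ℕ, l ≤ 2 * N →
      thetaPoch p q (q * t⁻¹ * (xiPt (a 0) t n k / xiPt (a 0) t n j)) l ≠ 0 ∧
        thetaPoch p q (q * t⁻¹ * (xiPt (a 0) t n j * xiPt (a 0) t n k)) l ≠ 0)
section Aux

lemma my_hasProd_zero {f : ℕ → ℂ} (i : ℕ) (h : f i = 0) : HasProd f 0 := by
  have hev : ∀ᶠ s : Finset ℕ in Filter.atTop, ∏ j ∈ s, f j = 0 := by
    filter_upwards [Filter.eventually_ge_atTop ({i} : Finset ℕ)] with s hs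
    exact Finset.prod_eq_zero (hs (Finset.mem_singleton_self i)) h
  exact Filter.Tendsto.congr' (Filter.EventuallyEq.symm hev) tendsto_const_nhds

lemma my_theta_one (p : ℂ) : theta p 1 = 0 :=
  (my_hasProd_zero 0 (by norm_num)).tprod_eq

lemma my_thetaPm_self (p x : ℂ) (hx : x ≠ 0) : thetaPm p x x = 0 := by
  unfold thetaPm
  rw [mul_inv_cancel₀ hx, my_theta_one, mul_zero]

lemma my_cardlt (n s : ℕ) (hs : s ≤ n) :
    #(univ.filter (fun j : Fin n => (j:ℕ) < s)) = s := by
  apply Finset.card_eq_of_bijective (fun i hi => (⟨i, lt_of_lt_of_le hi hs⟩ : Fin n))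
  · intro a ha
    obtain ⟨-, ha⟩ := Finset.mem_filter.mp ha
    exact ⟨(a:ℕ), ha, by simp⟩
  · intro i hi; simp [hi]
  · intro i j hi hj h; simpa using congrArg Fin.val h

lemma my_cardlti (n : ℕ) (i : Fin n) :
    #(univ.filter (fun j : Fin n => j < i)) = (i:ℕ) := by
  rw [Finset.filter_gt_eq_Iio, Fin.card_Iio]

lemma my_cardIco (n s : ℕ) (i : Fin n) (hsi : s ≤ (i:ℕ)) :
    #(univ.filter (fun j : Fin n => s ≤ (j:ℕ) ∧ j < i)) = (i:ℕ) - s := by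
  apply Finset.card_eq_of_bijective
    (fun m hm => (⟨m + s, by omega⟩ : Fin n))
  · intro a ha
    obtain ⟨-, ha1, ha2⟩ := Finset.mem_filter.mp ha
    rw [Fin.lt_def] at ha2
    refine ⟨(a:ℕ) - s, by omega, ?_⟩
    apply Fin.ext; simp; omega
  · intro m hm
    simp only [Finset.mem_filter, Finset.mem_univ, true_and, Fin.lt_def]
    exact ⟨by omega, by omega⟩
  · intro m m' hm hm' h
    have := congrArg Fin.val h
    simpa using this

lemma my_Efun_zeta (n : ℕ) (hn : 1 ≤ n) (p t a₁ a₂ : ℂ)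
    (ht : t ≠ 0) (ha₁ : a₁ ≠ 0) (ha₂ : a₂ ≠ 0)
    (hgen : eDenomsNZ p t a₁ a₂ n) (r s : ℕ) (hs : s ≤ n) :
    Efun p t a₁ a₂ r (zetaPt a₁ a₂ t n s) = if r = s then 1 else 0 := by
  set S₀ : Finset (Fin n) := univ.filter (fun j : Fin n => (j:ℕ) < s) with hS₀
  have hcardS₀ : #S₀ = s := my_cardlt n s hs
  have step1 : ∀ S ∈ Finset.powersetCard r (Finset.univ : Finset (Fin n)),
      (∏ i ∈ S,
        thetaPm p (a₂ * t ^ ((i : ℕ) - #(S.filter (fun j => j < i)))) (zetaPt a₁ a₂ t n s i) /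
          thetaPm p (a₂ * t ^ ((i : ℕ) - #(S.filter (fun j => j < i))))
            (a₁ * t ^ #(S.filter (fun j => j < i)))) *
      (∏ i ∈ Sᶜ,
        thetaPm p (a₁ * t ^ ((i : ℕ) - #(Sᶜ.filter (fun j => j < i)))) (zetaPt a₁ a₂ t n s i) /
          thetaPm p (a₁ * t ^ ((i : ℕ) - #(Sᶜ.filter (fun j => j < i))))
            (a₂ * t ^ #(Sᶜ.filter (fun j => j < i)))) =
      if S = S₀ then 1 else 0 := by
    intro S hS
    by_cases hSe : S = S₀
    · subst hSe
      rw [if_pos rfl]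
      have h1 : (∏ i ∈ S₀,
          thetaPm p (a₂ * t ^ ((i : ℕ) - #(S₀.filter (fun j => j < i)))) (zetaPt a₁ a₂ t n s i) /
            thetaPm p (a₂ * t ^ ((i : ℕ) - #(S₀.filter (fun j => j < i))))
              (a₁ * t ^ #(S₀.filter (fun j => j < i)))) = 1 := by
        apply Finset.prod_eq_one
        intro i hi
        have his : (i:ℕ) < s := by
          have := Finset.mem_filter.mp hi; exact this.2
        have hfil : S₀.filter (fun j => j < i) = univ.filter (fun j : Fin n => j < i) := by
          ext j
          simp only [hS₀, Finset.mem_filter, Finset.mem_univ, true_and, Fin.lt_def]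
          omega
        have hcard : #(S₀.filter (fun j => j < i)) = (i:ℕ) := by
          rw [hfil, my_cardlti]
        rw [hcard, Nat.sub_self, zetaPt, if_pos his]
        exact div_self (hgen 0 (i:ℕ) (by omega) i.isLt).1
      have h2 : (∏ i ∈ S₀ᶜ,
          thetaPm p (a₁ * t ^ ((i : ℕ) - #(S₀ᶜ.filter (fun j => j < i)))) (zetaPt a₁ a₂ t n s i) /
            thetaPm p (a₁ * t ^ ((i : ℕ) - #(S₀ᶜ.filter (fun j => j < i))))
              (a₂ * t ^ #(S₀ᶜ.filter (fun j => j < i)))) = 1 := by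
        apply Finset.prod_eq_one
        intro i hi
        have his : s ≤ (i:ℕ) := by
          have := Finset.mem_compl.mp hi
          simp only [hS₀, Finset.mem_filter, Finset.mem_univ, true_and] at this
          omega
        have hfil : S₀ᶜ.filter (fun j => j < i) =
            univ.filter (fun j : Fin n => s ≤ (j:ℕ) ∧ j < i) := by
          ext j
          simp only [hS₀, Finset.mem_filter, Finset.mem_univ, true_and, Finset.mem_compl,
            Fin.lt_def]
          omega
        have hcard : #(S₀ᶜ.filter (fun j => j < i)) = (i:ℕ) - s := by
          rw [hfil, my_cardIco n s i his]
        have hexp : (i:ℕ) - ((i:ℕ) - s) = s := by omega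
        rw [hcard, hexp, zetaPt, if_neg (by omega)]
        exact div_self (hgen s ((i:ℕ) - s) (by have := i.isLt; omega) (by have := i.isLt; omega)).2
      rw [h1, h2, mul_one]
    · rw [if_neg hSe]
      by_cases hsub : ∀ j : Fin n, (j:ℕ) < s → j ∈ S
      · -- some element of S is ≥ s ; take the least one
        have hne : (S.filter (fun j : Fin n => s ≤ (j:ℕ))).Nonempty := by
          rcases Finset.eq_empty_or_nonempty (S.filter (fun j : Fin n => s ≤ (j:ℕ))) with he | h
          · exfalso
            apply hSe
            ext j
            simp only [hS₀, Finset.mem_filter, Finset.mem_univ, true_and]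
            constructor
            · intro hjS
              by_contra hjs
              have : j ∈ S.filter (fun j : Fin n => s ≤ (j:ℕ)) :=
                Finset.mem_filter.mpr ⟨hjS, by omega⟩
              simp [he] at this
            · intro hjs; exact hsub j hjs
          · exact h
        set i := (S.filter (fun j : Fin n => s ≤ (j:ℕ))).min' hne with hidef
        have hiMem : i ∈ S.filter (fun j : Fin n => s ≤ (j:ℕ)) := Finset.min'_mem _ hne
        obtain ⟨hiS, his⟩ := Finset.mem_filter.mp hiMem
        have hfil : S.filter (fun j => j < i) = univ.filter (fun j : Fin n => (j:ℕ) < s) := by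
          ext j
          simp only [Finset.mem_filter, Finset.mem_univ, true_and]
          constructor
          · rintro ⟨hjS, hji⟩
            by_contra hjs
            have hjmem : j ∈ S.filter (fun j : Fin n => s ≤ (j:ℕ)) :=
              Finset.mem_filter.mpr ⟨hjS, by omega⟩
            exact absurd (Finset.min'_le _ j hjmem) (not_le.mpr hji)
          · intro hjs
            exact ⟨hsub j hjs, by rw [Fin.lt_def]; omega⟩
        have hcard : #(S.filter (fun j => j < i)) = s := by rw [hfil, my_cardlt n s hs]
        have hzero : thetaPm p (a₂ * t ^ ((i : ℕ) - #(S.filter (fun j => j < i))))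
            (zetaPt a₁ a₂ t n s i) /
            thetaPm p (a₂ * t ^ ((i : ℕ) - #(S.filter (fun j => j < i))))
              (a₁ * t ^ #(S.filter (fun j => j < i))) = 0 := by
          rw [hcard, zetaPt, if_neg (by omega),
            my_thetaPm_self p _ (mul_ne_zero ha₂ (pow_ne_zero _ ht)), zero_div]
        rw [Finset.prod_eq_zero hiS hzero, zero_mul]
      · push_neg at hsub
        obtain ⟨j₀, hj₀s, hj₀S⟩ := hsub
        have hne : (Sᶜ.filter (fun j : Fin n => (j:ℕ) < s)).Nonempty :=
          ⟨j₀, Finset.mem_filter.mpr ⟨Finset.mem_compl.mpr hj₀S, hj₀s⟩⟩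
        set i := (Sᶜ.filter (fun j : Fin n => (j:ℕ) < s)).min' hne with hidef
        have hiMem : i ∈ Sᶜ.filter (fun j : Fin n => (j:ℕ) < s) := Finset.min'_mem _ hne
        obtain ⟨hiS, his⟩ := Finset.mem_filter.mp hiMem
        have hfil : Sᶜ.filter (fun j => j < i) = ∅ := by
          rw [Finset.filter_eq_empty_iff]
          intro j hjC hji
          have hjmem : j ∈ Sᶜ.filter (fun j : Fin n => (j:ℕ) < s) :=
            Finset.mem_filter.mpr ⟨hjC, by rw [Fin.lt_def] at hji; omega⟩
          exact absurd (Finset.min'_le _ j hjmem) (not_le.mpr hji)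
        have hzero : thetaPm p (a₁ * t ^ ((i : ℕ) - #(Sᶜ.filter (fun j => j < i))))
            (zetaPt a₁ a₂ t n s i) /
            thetaPm p (a₁ * t ^ ((i : ℕ) - #(Sᶜ.filter (fun j => j < i))))
              (a₂ * t ^ #(Sᶜ.filter (fun j => j < i))) = 0 := by
          rw [hfil, Finset.card_empty, Nat.sub_zero, zetaPt, if_pos his,
            my_thetaPm_self p _ (mul_ne_zero ha₁ (pow_ne_zero _ ht)), zero_div]
        rw [Finset.prod_eq_zero hiS hzero, mul_zero]
  unfold Efun
  rw [Finset.sum_congr rfl step1, Finset.sum_ite_eq' _ S₀ (fun _ => (1:ℂ))]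
  by_cases hrs : r = s
  · rw [if_pos hrs, if_pos (by rw [Finset.mem_powersetCard_univ, hcardS₀, hrs])]
  · rw [if_neg hrs, if_neg (by rw [Finset.mem_powersetCard_univ, hcardS₀]; omega)]

end Aux

/-- linear independence of `E_0, E_1, …, E_n` over `ℂ`. -/
theorem Efun_linearIndependent (n : ℕ) (hn : 1 ≤ n) (p t a₁ a₂ : ℂ)
    (hp : ‖p‖ < 1) (hp0 : p ≠ 0) (ht : t ≠ 0) (ha₁ : a₁ ≠ 0) (ha₂ : a₂ ≠ 0)
    (hgen : eDenomsNZ p t a₁ a₂ n) (lam : Fin (n + 1) → ℂ)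
    (hlam : ∀ z : Fin n → ℂ, (∀ i, z i ≠ 0) →
      ∑ r : Fin (n + 1), lam r * Efun p t a₁ a₂ (r : ℕ) z = 0) :
    ∀ r : Fin (n + 1), lam r = 0 := by
  intro r
  have hz : ∀ i : Fin n, zetaPt a₁ a₂ t n (r:ℕ) i ≠ 0 := by
    intro i
    unfold zetaPt
    split
    · exact mul_ne_zero ha₁ (pow_ne_zero _ ht)
    · exact mul_ne_zero ha₂ (pow_ne_zero _ ht)
  have h := hlam (zetaPt a₁ a₂ t n (r:ℕ)) hz
  have key : ∀ r' : Fin (n + 1),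
      lam r' * Efun p t a₁ a₂ (r':ℕ) (zetaPt a₁ a₂ t n (r:ℕ)) =
        if r' = r then lam r' else 0 := by
    intro r'
    rw [my_Efun_zeta n hn p t a₁ a₂ ht ha₁ ha₂ hgen (r':ℕ) (r:ℕ) (Nat.lt_succ_iff.mp r.isLt)]
    by_cases h' : r' = r
    · rw [if_pos (by rw [h']), if_pos h', mul_one]
    · rw [if_neg (by simpa [Fin.ext_iff] using h'), if_neg h', mul_zero]
  rw [Finset.sum_congr rfl (fun r' _ => key r'), Finset.sum_ite_eq' _ r] at h
  simpa using h
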